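/- Suppose each value function v i is differentiable on [0, b i] with 0 ≤ v i'(s) ≤ pmax for all s ∈ [0, b i]. Then for every position S = (w, s), the risk measure agrees with its generating function: ρ(X_S) = θ(S) = -w - ∑ i, v i (s i). -/

import Mathlib

open MeasureTheory

noncomputable section

/-- The set of possible price scenarios. -/
abbrev Omega (N : ℕ) (pmax : ℝ) : Type :=
  {p : Fin N → ℝ // ∀ i, 0 ≤ p i ∧ p i ≤ pmax}

/-- A position `S = (w, s)`: collected revenue `w ≥ 0` and remaining budgets `0 ≤ s i ≤ b i`. -/
def IsPosition (N : ℕ) (b : Fin N → ℝ) (S : ℝ × (Fin N → ℝ)) : Prop :=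
  0 ≤ S.1 ∧ ∀ i, 0 ≤ S.2 i ∧ S.2 i ≤ b i

/-- Return function of a position: `X_S(p) = w + ∑ i, p i * s i`. -/
def ret (N : ℕ) (pmax : ℝ) (S : ℝ × (Fin N → ℝ)) (p : Omega N pmax) : ℝ :=
  S.1 + ∑ i, p.1 i * S.2 i

/-- Generating function `θ(S) = -w - ∑ i, v i (s i)`. -/
def theta (N : ℕ) (v : Fin N → ℝ → ℝ) (S : ℝ × (Fin N → ℝ)) : ℝ :=
  -S.1 - ∑ i, v i (S.2 i)

/-- Risk measure `ρ(X) = inf { θ(S) : S a position with X_S ≤ X pointwise }`, valued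
in `ℝ ∪ {+∞}` (the infimum of the empty set is `+∞`). -/
def rho (N : ℕ) (b : Fin N → ℝ) (pmax : ℝ) (v : Fin N → ℝ → ℝ)
    (X : Omega N pmax → ℝ) : EReal :=
  sInf {t : EReal | ∃ S : ℝ × (Fin N → ℝ), IsPosition N b S ∧
    (∀ p, ret N pmax S p ≤ X p) ∧ t = ((theta N v S : ℝ) : EReal)}

/-- A bounded function on `Ω`. -/
def Bounded (N : ℕ) (pmax : ℝ) (X : Omega N pmax → ℝ) : Prop :=
  ∃ C, ∀ p, |X p| ≤ C

lemma key_ineq {b pmax : ℝ} (hb : 0 < b) (hpmax : 0 < pmax) {v v' : ℝ → ℝ}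
    (hderiv : ∀ s ∈ Set.Icc (0:ℝ) b, HasDerivWithinAt v (v' s) (Set.Icc (0:ℝ) b) s)
    (hbound : ∀ s ∈ Set.Icc (0:ℝ) b, 0 ≤ v' s ∧ v' s ≤ pmax)
    {x y : ℝ} (hx : x ∈ Set.Icc (0:ℝ) b) (hy : y ∈ Set.Icc (0:ℝ) b) (hxy : x ≤ y) :
    0 ≤ v y - v x ∧ v y - v x ≤ pmax * (y - x) := by
  have hcont : ContinuousOn v (Set.Icc (0:ℝ) b) :=
    fun z hz => (hderiv z hz).continuousWithinAt
  have hint : interior (Set.Icc (0:ℝ) b) ⊆ Set.Icc (0:ℝ) b := interior_subset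
  constructor
  · have hmono : MonotoneOn v (Set.Icc (0:ℝ) b) :=
      monotoneOn_of_hasDerivWithinAt_nonneg (convex_Icc _ _) hcont
        (fun z hz => (hderiv z (hint hz)).mono hint)
        (fun z hz => (hbound z (hint hz)).1)
    linarith [hmono hx hy hxy]
  · set g : ℝ → ℝ := fun z => pmax * z - v z with hg
    have hmono : MonotoneOn g (Set.Icc (0:ℝ) b) := by
      refine monotoneOn_of_hasDerivWithinAt_nonneg (f' := fun z => pmax - v' z)
        (convex_Icc _ _) ?_ (fun z hz => ?_) (fun z hz => ?_)
      · exact (continuousOn_const.mul continuousOn_id).sub hcont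
      · have h := (((hasDerivWithinAt_id z _).const_mul pmax).sub
          (hderiv z (hint hz))).mono hint
        simp only [mul_one] at h
        exact h
      · show 0 ≤ pmax - v' z
        linarith [(hbound z (hint hz)).2]
    have := hmono hx hy hxy
    simp only [hg] at this
    linarith

/-- on return functions of positions, the risk measure coincides with its
generating function: `ρ(X_S) = θ(S) = -w - ∑ i, v i (s i)`. -/
theorem stmt3 (N : ℕ) (hN : 1 ≤ N) (b : Fin N → ℝ) (hb : ∀ i, 0 < b i)
    (pmax : ℝ) (hpmax : 0 < pmax)
    (v v' : Fin N → ℝ → ℝ)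
    (hderiv : ∀ i, ∀ s ∈ Set.Icc (0:ℝ) (b i),
      HasDerivWithinAt (v i) (v' i s) (Set.Icc (0:ℝ) (b i)) s)
    (hbound : ∀ i, ∀ s ∈ Set.Icc (0:ℝ) (b i), 0 ≤ v' i s ∧ v' i s ≤ pmax)
    (S : ℝ × (Fin N → ℝ)) (hS : IsPosition N b S) :
    rho N b pmax v (ret N pmax S) = ((theta N v S : ℝ) : EReal) ∧
    theta N v S = -S.1 - ∑ i, v i (S.2 i) := by
  refine ⟨?_, rfl⟩
  apply le_antisymm
  · exact sInf_le ⟨S, hS, fun p => le_rfl, rfl⟩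
  · rw [rho, le_sInf_iff]
    rintro t ⟨T, hT, hle, rfl⟩
    rw [EReal.coe_le_coe_iff]
    -- choose prices: pmax where T.2 i > S.2 i, else 0
    set q : Fin N → ℝ := fun i => if S.2 i < T.2 i then pmax else 0 with hq
    have hqmem : ∀ i, 0 ≤ q i ∧ q i ≤ pmax := by
      intro i; simp only [hq]; split <;> constructor <;> linarith
    have hconstraint := hle ⟨q, hqmem⟩
    simp only [ret] at hconstraint
    have hterm : ∀ i, v i (T.2 i) - v i (S.2 i) ≤ q i * (T.2 i - S.2 i) := by
      intro i
      have hSi : S.2 i ∈ Set.Icc (0:ℝ) (b i) := ⟨(hS.2 i).1, (hS.2 i).2⟩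
      have hTi : T.2 i ∈ Set.Icc (0:ℝ) (b i) := ⟨(hT.2 i).1, (hT.2 i).2⟩
      by_cases h : S.2 i < T.2 i
      · have := (key_ineq (hb i) hpmax (hderiv i) (hbound i) hSi hTi h.le).2
        simp only [hq, if_pos h]; linarith
      · push_neg at h
        have := (key_ineq (hb i) hpmax (hderiv i) (hbound i) hTi hSi h).1
        simp only [hq, if_neg (not_lt.mpr h)]; linarith
    have hsum : ∑ i, (v i (T.2 i) - v i (S.2 i)) ≤ ∑ i, q i * (T.2 i - S.2 i) :=
      Finset.sum_le_sum fun i _ => hterm i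
    simp only [theta]
    have e1 : ∑ i, q i * (T.2 i - S.2 i) = (∑ i, q i * T.2 i) - ∑ i, q i * S.2 i := by
      rw [← Finset.sum_sub_distrib]; congr 1; ext i; ring
    rw [Finset.sum_sub_distrib] at hsum
    rw [e1] at hsum
    linarith

end
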